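/- Let L = {p¹, ..., pᵏ} ⊆ ℝ² be a finite set of points sorted strictly increasing in the first coordinate and strictly decreasing in the second coordinate, such that consecutive triples are in convex position (each pⁱ lies strictly below the segment joining pⁱ⁻¹ and pⁱ⁺¹). Then for every δ ∈ ℝ²_{>0}, the minimizer of δ·p over all points of the conventional skyline containing L is attained at a point of L; i.e., L is optimal under all positive linear combinations. -/
import Mathlib

private lemma chain_down (g : ℕ → ℝ) :
    ∀ i, (∀ j, j < i → g (j + 1) ≤ g j) → ∀ j, j ≤ i → g i ≤ g j := by
  intro i
  induction i with
  | zero =>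
    intro _ j hj
    have : j = 0 := Nat.le_zero.mp hj
    simp [this]
  | succ n ih =>
    intro h j hj
    rcases Nat.eq_or_lt_of_le hj with he | hl
    · rw [he]
    · have h1 : g (n + 1) ≤ g n := h n (Nat.lt_succ_self n)
      have h2 : g n ≤ g j :=
        ih (fun l hl' => h l (hl'.trans (Nat.lt_succ_self n))) j (Nat.lt_succ_iff.mp hl)
      exact h1.trans h2

private lemma chain_up (g : ℕ → ℝ) (i : ℕ) :
    ∀ j, i ≤ j → (∀ l, i ≤ l → l < j → g l ≤ g (l + 1)) → g i ≤ g j := by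
  intro j
  induction j with
  | zero =>
    intro hij _
    have : i = 0 := Nat.le_zero.mp hij
    simp [this]
  | succ n ih =>
    intro hij h
    rcases Nat.eq_or_lt_of_le hij with he | hl
    · rw [he]
    · have hin : i ≤ n := Nat.lt_succ_iff.mp hl
      exact (ih hin (fun l ha hb => h l ha (hb.trans (Nat.lt_succ_self n)))).trans
        (h n hin (Nat.lt_succ_self n))

theorem convex_chain_linearly_optimal
    (k : ℕ) (hk : 1 ≤ k) (p : ℕ → ℝ × ℝ)
    (hfst : ∀ i, i + 1 < k → (p i).1 < (p (i + 1)).1)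
    (hsnd : ∀ i, i + 1 < k → (p (i + 1)).2 < (p i).2)
    (hconv : ∀ i, i + 2 < k →
      (p (i + 1)).2 < (p i).2 + ((p (i + 2)).2 - (p i).2) *
        ((p (i + 1)).1 - (p i).1) / ((p (i + 2)).1 - (p i).1))
    (S : Finset (ℝ × ℝ))
    (hL : ∀ i < k, p i ∈ S)
    (hanti : ∀ q ∈ S, ∀ q' ∈ S, q ≠ q' →
      ¬((q.1 ≤ q'.1 ∧ q.2 ≤ q'.2)))
    (hcover : ∀ q ∈ S, (∀ i < k, q ≠ p i) →
      (∃ i < k, (p i).1 ≤ q.1 ∧ (p i).2 ≤ q.2) ∨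
      (∃ i < k, ∃ j < k, (p i).1 ≤ q.1 ∧ q.1 ≤ (p j).1 ∧ (p i).1 < (p j).1 ∧
        (p i).2 + ((p j).2 - (p i).2) * (q.1 - (p i).1) / ((p j).1 - (p i).1)
          ≤ q.2)) :
    (∀ i < k, ∃ δ₁ δ₂ : ℝ, 0 < δ₁ ∧ 0 < δ₂ ∧
        ∀ j < k, δ₁ * (p i).1 + δ₂ * (p i).2 ≤ δ₁ * (p j).1 + δ₂ * (p j).2) ∧
    (∀ δ₁ δ₂ : ℝ, 0 < δ₁ → 0 < δ₂ →
        ∃ i < k, ∀ q ∈ S,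
          δ₁ * (p i).1 + δ₂ * (p i).2 ≤ δ₁ * q.1 + δ₂ * q.2) := by
  -- slopes of consecutive segments
  set s : ℕ → ℝ := fun j => ((p (j + 1)).2 - (p j).2) / ((p (j + 1)).1 - (p j).1) with hs
  have hdx : ∀ j, j + 1 < k → 0 < (p (j + 1)).1 - (p j).1 :=
    fun j hj => sub_pos.mpr (hfst j hj)
  have hsy : ∀ j, j + 1 < k → (p (j + 1)).2 - (p j).2 = s j * ((p (j + 1)).1 - (p j).1) := by
    intro j hj
    rw [hs]
    exact (div_mul_cancel₀ _ (ne_of_gt (hdx j hj))).symm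
  have sneg : ∀ j, j + 1 < k → s j < 0 := by
    intro j hj
    exact div_neg_of_neg_of_pos (by have := hsnd j hj; linarith) (hdx j hj)
  have sstep : ∀ j, j + 2 < k → s j < s (j + 1) := by
    intro j hj
    have h01 : 0 < (p (j + 1)).1 - (p j).1 := hdx j (by omega)
    have h12 : 0 < (p (j + 2)).1 - (p (j + 1)).1 := hdx (j + 1) (by omega)
    have h02 : 0 < (p (j + 2)).1 - (p j).1 := by linarith
    have hc := hconv j hj
    have h' : ((p (j + 1)).2 - (p j).2) * ((p (j + 2)).1 - (p j).1) <
        ((p (j + 2)).2 - (p j).2) * ((p (j + 1)).1 - (p j).1) := by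
      have h2 : (p (j + 1)).2 - (p j).2 <
          ((p (j + 2)).2 - (p j).2) * ((p (j + 1)).1 - (p j).1) / ((p (j + 2)).1 - (p j).1) := by
        linarith
      calc ((p (j + 1)).2 - (p j).2) * ((p (j + 2)).1 - (p j).1)
          < ((p (j + 2)).2 - (p j).2) * ((p (j + 1)).1 - (p j).1) / ((p (j + 2)).1 - (p j).1)
            * ((p (j + 2)).1 - (p j).1) := by
            exact mul_lt_mul_of_pos_right h2 h02
        _ = ((p (j + 2)).2 - (p j).2) * ((p (j + 1)).1 - (p j).1) := by
            field_simp
    rw [hs]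
    rw [div_lt_div_iff₀ h01 h12]
    nlinarith [h']
  have smono : ∀ a b : ℕ, a ≤ b → b + 1 < k → s a ≤ s b := by
    intro a b
    induction b with
    | zero =>
      intro ha _
      have : a = 0 := Nat.le_zero.mp ha
      simp [this]
    | succ n ih =>
      intro ha hk'
      rcases Nat.eq_or_lt_of_le ha with he | hl
      · rw [he]
      · have han : a ≤ n := Nat.lt_succ_iff.mp hl
        exact (ih han (by omega)).trans (le_of_lt (sstep n (by omega)))
  constructor
  · -- part (a)
    intro i hi
    have key : ∀ m : ℝ, m < 0 → (∀ j, j < i → s j < m) → (∀ j, i ≤ j → j + 1 < k → m < s j) →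
        ∃ δ₁ δ₂ : ℝ, 0 < δ₁ ∧ 0 < δ₂ ∧
          ∀ j < k, δ₁ * (p i).1 + δ₂ * (p i).2 ≤ δ₁ * (p j).1 + δ₂ * (p j).2 := by
      intro m hm0 hlow hhigh
      refine ⟨-m, 1, by linarith, one_pos, ?_⟩
      intro j hj
      set g : ℕ → ℝ := fun l => -m * (p l).1 + (p l).2 with hg
      have step_down : ∀ l, l < i → g (l + 1) ≤ g l := by
        intro l hl
        have hlk : l + 1 < k := by omega
        have h1 := hdx l hlk
        have h2 := hsy l hlk
        have h3 := hlow l hl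
        simp only [hg]
        nlinarith
      have step_up : ∀ l, i ≤ l → l + 1 < k → g l ≤ g (l + 1) := by
        intro l hl hlk
        have h1 := hdx l hlk
        have h2 := hsy l hlk
        have h3 := hhigh l hl hlk
        simp only [hg]
        nlinarith
      have : g i ≤ g j := by
        rcases le_or_gt j i with h | h
        · exact chain_down g i step_down j h
        · exact chain_up g i j h.le (fun l ha hb => step_up l ha (by omega))
      simp only [hg] at this
      linarith
    by_cases hk1 : k = 1
    · refine key (-1) (by norm_num) ?_ ?_
      · intro j hj
        omega
      · intro j _ hj
        omega
    · have hk2 : 2 ≤ k := by omega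
      rcases Nat.eq_zero_or_pos i with hi0 | hipos
      · subst hi0
        refine key (s 0 - 1) (by have := sneg 0 (by omega); linarith) ?_ ?_
        · intro j hj; omega
        · intro j _ hj
          have := smono 0 j (Nat.zero_le j) hj
          linarith
      · obtain ⟨i', rfl⟩ : ∃ i', i = i' + 1 := ⟨i - 1, by omega⟩
        by_cases hlast : i' + 2 = k
        · refine key (s i' / 2) ?_ ?_ ?_
          · have := sneg i' (by omega); linarith
          · intro j hj
            have h1 : s j ≤ s i' := smono j i' (by omega) (by omega)
            have h2 := sneg i' (by omega)
            linarith
          · intro j h1 h2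
            omega
        · have hi2 : i' + 2 < k := by omega
          have hst := sstep i' hi2
          have hneg := sneg (i' + 1) (by omega)
          refine key ((s i' + s (i' + 1)) / 2) (by linarith) ?_ ?_
          · intro j hj
            have h1 : s j ≤ s i' := smono j i' (by omega) (by omega)
            linarith
          · intro j h1 h2
            have h3 : s (i' + 1) ≤ s j := smono (i' + 1) j h1 h2
            linarith
  · -- part (b)
    intro δ₁ δ₂ hδ₁ hδ₂
    obtain ⟨i, hi, hmin⟩ := Finset.exists_min_image (Finset.range k)
      (fun j => δ₁ * (p j).1 + δ₂ * (p j).2) ⟨0, Finset.mem_range.mpr hk⟩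
    refine ⟨i, Finset.mem_range.mp hi, ?_⟩
    intro q hq
    by_cases hqp : ∀ j < k, q ≠ p j
    · rcases hcover q hq hqp with ⟨a, ha, h1, h2⟩ | ⟨a, ha, b, hb, hax, hxb, hab, hline⟩
      · have hFa : δ₁ * (p i).1 + δ₂ * (p i).2 ≤ δ₁ * (p a).1 + δ₂ * (p a).2 :=
          hmin a (Finset.mem_range.mpr ha)
        have : δ₁ * (p a).1 + δ₂ * (p a).2 ≤ δ₁ * q.1 + δ₂ * q.2 :=
          add_le_add (mul_le_mul_of_nonneg_left h1 hδ₁.le)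
            (mul_le_mul_of_nonneg_left h2 hδ₂.le)
        linarith
      · have hd : 0 < (p b).1 - (p a).1 := sub_pos.mpr hab
        have hFa : δ₁ * (p i).1 + δ₂ * (p i).2 ≤ δ₁ * (p a).1 + δ₂ * (p a).2 :=
          hmin a (Finset.mem_range.mpr ha)
        have hFb : δ₁ * (p i).1 + δ₂ * (p i).2 ≤ δ₁ * (p b).1 + δ₂ * (p b).2 :=
          hmin b (Finset.mem_range.mpr hb)
        have hline' : ((p b).2 - (p a).2) * (q.1 - (p a).1) ≤
            (q.2 - (p a).2) * ((p b).1 - (p a).1) := by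
          have h' : ((p b).2 - (p a).2) * (q.1 - (p a).1) / ((p b).1 - (p a).1) ≤
              q.2 - (p a).2 := by linarith
          exact (div_le_iff₀ hd).mp h'
        have key : (δ₁ * (p i).1 + δ₂ * (p i).2) * ((p b).1 - (p a).1) ≤
            (δ₁ * q.1 + δ₂ * q.2) * ((p b).1 - (p a).1) := by
          nlinarith [mul_nonneg (sub_nonneg.mpr hxb) (sub_nonneg.mpr hFa),
            mul_nonneg (sub_nonneg.mpr hax) (sub_nonneg.mpr hFb),
            mul_le_mul_of_nonneg_left hline' hδ₂.le]
        exact le_of_mul_le_mul_right key hd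
    · push_neg at hqp
      obtain ⟨j, hj, hqj⟩ := hqp
      rw [hqj]
      exact hmin j (Finset.mem_range.mpr hj)
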